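/- arXiv:2510.00530 — 2 statements merged into one kernel-verified Lean document; each statement's English description precedes it below -/
import Mathlib

section
/- For any finite simple graph G on n vertices, th_dim(G) = n − 1 if and only if th_dim(Ḡ) = n − 1, where Ḡ is the complement of G. -/
open SimpleGraph Filter

/-- The `r`-truncated distance between vertices: `min(d(u,v), r+1)`. -/
noncomputable def truncDist {V : Type*} (G : SimpleGraph V) (r : ℕ) (u v : V) : ℕ∞ :=
  min (G.edist u v) (r + 1)

/-- `S` is a distance-`r` resolving set of `G`. -/
def IsDistResolving {V : Type*} (G : SimpleGraph V) (r : ℕ) (S : Finset V) : Prop :=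
  ∀ x y : V, x ≠ y → ∃ v ∈ S, truncDist G r v x ≠ truncDist G r v y

/-- The `r`-truncated metric dimension of `G`. -/
noncomputable def dimr {V : Type*} (G : SimpleGraph V) (r : ℕ) : ℕ :=
  sInf {k | ∃ S : Finset V, IsDistResolving G r S ∧ S.card = k}

/-- The metric dimension throttling number of `G`. -/
noncomputable def thDim {V : Type*} (G : SimpleGraph V) : ℕ :=
  sInf {m | ∃ r : ℕ, m = r + dimr G r}

/-- `S` is a resolving set of `G` (untruncated distances). -/
def IsResolving {V : Type*} (G : SimpleGraph V) (S : Finset V) : Prop :=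
  ∀ x y : V, x ≠ y → ∃ v ∈ S, G.edist v x ≠ G.edist v y

/-- The metric dimension of `G`. -/
noncomputable def metricDim {V : Type*} (G : SimpleGraph V) : ℕ :=
  sInf {k | ∃ S : Finset V, IsResolving G S ∧ S.card = k}

/-- Distance from an edge (as an unordered pair `{u,w}`) to a vertex:
`min(d(u,v), d(w,v))`. -/
noncomputable def edgeEDist {V : Type*} (G : SimpleGraph V) (e : Sym2 V) (v : V) : ℕ∞ :=
  Sym2.lift ⟨fun a b => min (G.edist a v) (G.edist b v), fun _ _ => min_comm _ _⟩ e

/-- The `r`-truncated distance from an edge to a vertex. -/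
noncomputable def truncEdgeDist {V : Type*} (G : SimpleGraph V) (r : ℕ) (e : Sym2 V)
    (v : V) : ℕ∞ :=
  min (edgeEDist G e v) (r + 1)

/-- `S` is a distance-`r` edge resolving set of `G`. -/
def IsEdgeResolving {V : Type*} (G : SimpleGraph V) (r : ℕ) (S : Finset V) : Prop :=
  ∀ e ∈ G.edgeSet, ∀ f ∈ G.edgeSet, e ≠ f →
    ∃ v ∈ S, truncEdgeDist G r e v ≠ truncEdgeDist G r f v

/-- The `r`-truncated edge metric dimension of `G`. -/
noncomputable def edimr {V : Type*} (G : SimpleGraph V) (r : ℕ) : ℕ :=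
  sInf {k | ∃ S : Finset V, IsEdgeResolving G r S ∧ S.card = k}

/-- The edge metric dimension throttling number of `G`. -/
noncomputable def thEdim {V : Type*} (G : SimpleGraph V) : ℕ :=
  sInf {m | ∃ r : ℕ, m = r + edimr G r}

/-- An item of `G` is a vertex or an edge; distance from an item to a vertex. -/
noncomputable def itemEDist {V : Type*} (G : SimpleGraph V) : V ⊕ G.edgeSet → V → ℕ∞
  | Sum.inl u, v => G.edist u v
  | Sum.inr e, v => edgeEDist G (e : Sym2 V) v

/-- The `r`-truncated distance from an item to a vertex. -/
noncomputable def truncItemDist {V : Type*} (G : SimpleGraph V) (r : ℕ)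
    (t : V ⊕ G.edgeSet) (v : V) : ℕ∞ :=
  min (itemEDist G t v) (r + 1)

/-- `S` is a distance-`r` mixed resolving set of `G`. -/
def IsMixedResolving {V : Type*} (G : SimpleGraph V) (r : ℕ) (S : Finset V) : Prop :=
  ∀ t₁ t₂ : V ⊕ G.edgeSet, t₁ ≠ t₂ →
    ∃ v ∈ S, truncItemDist G r t₁ v ≠ truncItemDist G r t₂ v

/-- The `r`-truncated mixed metric dimension of `G`. -/
noncomputable def mdimr {V : Type*} (G : SimpleGraph V) (r : ℕ) : ℕ :=
  sInf {k | ∃ S : Finset V, IsMixedResolving G r S ∧ S.card = k}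

/-- The mixed metric dimension throttling number of `G`. -/
noncomputable def thMdim {V : Type*} (G : SimpleGraph V) : ℕ :=
  sInf {m | ∃ r : ℕ, m = r + mdimr G r}

/-- `S` is a mixed resolving set of `G` (untruncated distances). -/
def IsMixedResolvingSet {V : Type*} (G : SimpleGraph V) (S : Finset V) : Prop :=
  ∀ t₁ t₂ : V ⊕ G.edgeSet, t₁ ≠ t₂ → ∃ v ∈ S, itemEDist G t₁ v ≠ itemEDist G t₂ v

/-- The mixed metric dimension of `G`. -/
noncomputable def mixedDim {V : Type*} (G : SimpleGraph V) : ℕ :=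
  sInf {k | ∃ S : Finset V, IsMixedResolvingSet G S ∧ S.card = k}


/-! ### Auxiliary lemmas for `stmt12` -/

set_option linter.unusedSectionVars false

section Stmt12Aux

variable {V : Type*}

private lemma truncDist_self (G : SimpleGraph V) (r : ℕ) (v : V) : truncDist G r v v = 0 := by
  simp [truncDist, SimpleGraph.edist_self]

private lemma truncDist_ne_zero (G : SimpleGraph V) (r : ℕ) {v x : V} (h : v ≠ x) :
    truncDist G r v x ≠ 0 := by
  have h1 : (0 : ℕ∞) < G.edist v x := G.edist_pos_of_ne h
  have h2 : (0 : ℕ∞) < (r : ℕ∞) + 1 := lt_of_lt_of_le zero_lt_one le_add_self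
  exact (lt_min h1 h2).ne'

private lemma truncDist_edist_ne (G : SimpleGraph V) (r : ℕ) {u a b : V}
    (h : truncDist G r u a ≠ truncDist G r u b) : G.edist u a ≠ G.edist u b := fun he => by
  simp [truncDist, he] at h

private lemma truncDist_one_adj (G : SimpleGraph V) {v x : V} (h : G.Adj v x) :
    truncDist G 1 v x = 1 := by
  rw [truncDist, SimpleGraph.edist_eq_one_iff_adj.mpr h]
  have : ((1 : ℕ) : ℕ∞) + 1 = 2 := by norm_cast
  rw [this]
  exact min_eq_left (by decide)

private lemma truncDist_one_nadj (G : SimpleGraph V) {v x : V} (hne : v ≠ x)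
    (h : ¬ G.Adj v x) : truncDist G 1 v x = 2 := by
  have h0 : G.edist v x ≠ 0 := by simp [SimpleGraph.edist_eq_zero_iff, hne]
  have h1 : G.edist v x ≠ 1 := fun hh => h (SimpleGraph.edist_eq_one_iff_adj.mp hh)
  have h2 : (2 : ℕ∞) ≤ G.edist v x := by
    have hlt : (1 : ℕ∞) < G.edist v x := (ENat.one_le_iff_ne_zero.mpr h0).lt_of_ne (Ne.symm h1)
    exact ENat.add_one_le_iff (by decide) |>.mpr hlt
  rw [truncDist]
  have : ((1 : ℕ) : ℕ∞) + 1 = 2 := by norm_cast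
  rw [this]
  exact min_eq_right h2

private lemma truncDist_one_ne (G : SimpleGraph V) {v a b : V} (hva : v ≠ a) (hvb : v ≠ b)
    (h : ¬ (G.Adj v a ↔ G.Adj v b)) : truncDist G 1 v a ≠ truncDist G 1 v b := by
  by_cases h1 : G.Adj v a <;> by_cases h2 : G.Adj v b
  · exact absurd (iff_of_true h1 h2) h
  · rw [truncDist_one_adj G h1, truncDist_one_nadj G hvb h2]; decide
  · rw [truncDist_one_nadj G hva h1, truncDist_one_adj G h2]; decide
  · exact absurd (iff_of_false h1 h2) h


private lemma walk_bound (G : SimpleGraph V) (B : Set V)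
    (hB : ∀ v ∉ B, ∀ a ∈ B, ∀ b ∈ B, (G.Adj v a ↔ G.Adj v b)) :
    ∀ {v b : V} (p : G.Walk v b), v ∉ B → b ∈ B → ∀ a ∈ B, G.edist v a ≤ p.length := by
  intro v b p
  induction p with
  | nil => intro hv hb a _; exact absurd hb hv
  | @cons u u' b' hadj q ih =>
    intro hu hb a ha
    by_cases hu' : u' ∈ B
    · have hadj' : G.Adj u a := (hB u hu a ha u' hu').mpr hadj
      have : G.edist u a = 1 := SimpleGraph.edist_eq_one_iff_adj.mpr hadj'
      rw [this, SimpleGraph.Walk.length_cons]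
      push_cast
      exact le_add_self
    · have h1 : G.edist u u' ≤ 1 := le_of_eq (SimpleGraph.edist_eq_one_iff_adj.mpr hadj)
      have h2 := ih hu' hb a ha
      calc G.edist u a ≤ G.edist u u' + G.edist u' a := SimpleGraph.edist_triangle
        _ ≤ 1 + q.length := add_le_add h1 h2
        _ = ((q.length + 1 : ℕ) : ℕ∞) := by push_cast; ring
        _ = ((SimpleGraph.Walk.cons hadj q).length : ℕ∞) := by
              rw [SimpleGraph.Walk.length_cons]

private lemma module_edist (G : SimpleGraph V) (B : Set V)
    (hB : ∀ v ∉ B, ∀ a ∈ B, ∀ b ∈ B, (G.Adj v a ↔ G.Adj v b)) :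
    ∀ v ∉ B, ∀ a ∈ B, ∀ b ∈ B, G.edist v a = G.edist v b := by
  have le1 : ∀ v ∉ B, ∀ a ∈ B, ∀ b ∈ B, G.edist v a ≤ G.edist v b := by
    intro v hv a ha b hb
    by_cases htop : G.edist v b = ⊤
    · rw [htop]; exact le_top
    · obtain ⟨p, hp⟩ := SimpleGraph.exists_walk_of_edist_ne_top htop
      rw [← hp]
      exact walk_bound G B hB p hv hb a ha
  intro v hv a ha b hb
  exact le_antisymm (le1 v hv a ha b hb) (le1 v hv b hb a ha)


private def Pp (G : SimpleGraph V) (a b c : V) : Prop :=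
  ∀ v : V, v ≠ a → v ≠ b → v ≠ c → (G.Adj v a ↔ G.Adj v b)

private lemma Pp.app {G : SimpleGraph V} {a b c : V} (h : Pp G a b c) :
    ∀ v : V, v ≠ a → v ≠ b → v ≠ c → (G.Adj v a ↔ G.Adj v b) := h

private def Dis (G : SimpleGraph V) (a b c : V) : Prop := ¬ Pp G a b c

private lemma exists_four [DecidableEq V] (s : Finset V) (h : 4 ≤ s.card) :
    ∃ x ∈ s, ∃ y ∈ s, ∃ z ∈ s, ∃ w ∈ s,
      x ≠ y ∧ x ≠ z ∧ x ≠ w ∧ y ≠ z ∧ y ≠ w ∧ z ≠ w := by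
  have h0 : 0 < s.card := by omega
  obtain ⟨x, hx⟩ := Finset.card_pos.mp h0
  have h1 : 0 < (s.erase x).card := by rw [Finset.card_erase_of_mem hx]; omega
  obtain ⟨y, hy⟩ := Finset.card_pos.mp h1
  have h2 : 0 < ((s.erase x).erase y).card := by
    rw [Finset.card_erase_of_mem hy, Finset.card_erase_of_mem hx]; omega
  obtain ⟨z, hz⟩ := Finset.card_pos.mp h2
  have h3 : 0 < (((s.erase x).erase y).erase z).card := by
    rw [Finset.card_erase_of_mem hz, Finset.card_erase_of_mem hy,
      Finset.card_erase_of_mem hx]; omega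
  obtain ⟨w, hw⟩ := Finset.card_pos.mp h3
  simp only [Finset.mem_erase] at hy hz hw
  exact ⟨x, hx, y, hy.2, z, hz.2.2, w, hw.2.2.2,
    Ne.symm hy.1, Ne.symm hz.2.1, Ne.symm hw.2.2.1, Ne.symm hz.1, Ne.symm hw.2.1,
    Ne.symm hw.1⟩

set_option maxHeartbeats 0 in
private lemma key_triple [Fintype V] (G : SimpleGraph V) {r : ℕ} {S : Finset V}
    (hS : IsDistResolving G r S) (hcard : S.card + 4 ≤ Fintype.card V) :
    ∃ a b c : V, a ≠ b ∧ a ≠ c ∧ b ≠ c ∧ Dis G a b c ∧ Dis G a c b ∧ Dis G b c a := by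
  classical
  have hc : 4 ≤ Sᶜ.card := by rw [Finset.card_compl]; omega
  obtain ⟨x, hx, y, hy, z, hz, w, hw, hxy, hxz, hxw, hyz, hyw, hzw⟩ := exists_four Sᶜ hc
  have hyx : y ≠ x := hxy.symm
  have hzx : z ≠ x := hxz.symm
  have hwx : w ≠ x := hxw.symm
  have hzy : z ≠ y := hyz.symm
  have hwy : w ≠ y := hyw.symm
  have hwz : w ≠ z := hzw.symm
  have hxS : x ∉ S := Finset.mem_compl.mp hx
  have hyS : y ∉ S := Finset.mem_compl.mp hy
  have hzS : z ∉ S := Finset.mem_compl.mp hz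
  have hwS : w ∉ S := Finset.mem_compl.mp hw
  have dis : ∀ a b : V, a ≠ b → ∃ u ∈ S, G.edist u a ≠ G.edist u b := by
    intro a b hab
    obtain ⟨u, huS, hu⟩ := hS a b hab
    exact ⟨u, huS, truncDist_edist_ne G r hu⟩
  by_contra hng
  have twin : ∀ {a b c c' : V}, Pp G a b c → Pp G a b c' → c ≠ c' → c ≠ a → c ≠ b →
      a ∉ S → b ∉ S → a ≠ b → False := by
    intro a b c c' h1 h2 hcc' hca hcb haS hbS hab
    have hmod : ∀ v ∉ ({a, b} : Set V), ∀ p ∈ ({a, b} : Set V), ∀ q ∈ ({a, b} : Set V),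
        (G.Adj v p ↔ G.Adj v q) := by
      intro v hv p hp q hq
      simp only [Set.mem_insert_iff, Set.mem_singleton_iff] at hv hp hq
      push_neg at hv
      have hkey : G.Adj v a ↔ G.Adj v b := by
        by_cases hvc : v = c
        · subst hvc; exact h2.app v hca hcb hcc'
        · exact h1.app v hv.1 hv.2 hvc
      rcases hp with rfl | rfl <;> rcases hq with rfl | rfl <;> tauto
    obtain ⟨u, huS, hu⟩ := dis a b hab
    have huB : u ∉ ({a, b} : Set V) := by
      simp only [Set.mem_insert_iff, Set.mem_singleton_iff]
      push_neg
      exact ⟨fun h => haS (h ▸ huS), fun h => hbS (h ▸ huS)⟩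
    exact hu (module_edist G _ hmod u huB a (by simp) b (by simp))
  have quadkill : (∀ v : V, v ≠ x → v ≠ y → v ≠ z → v ≠ w →
      ((G.Adj v x ↔ G.Adj v y) ∧ (G.Adj v x ↔ G.Adj v z) ∧ (G.Adj v x ↔ G.Adj v w))) →
      False := by
    intro M
    have hmod : ∀ v ∉ ({x, y, z, w} : Set V), ∀ p ∈ ({x, y, z, w} : Set V),
        ∀ q ∈ ({x, y, z, w} : Set V), (G.Adj v p ↔ G.Adj v q) := by
      intro v hv p hp q hq
      simp only [Set.mem_insert_iff, Set.mem_singleton_iff] at hv hp hq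
      push_neg at hv
      obtain ⟨m1, m2, m3⟩ := M v hv.1 hv.2.1 hv.2.2.1 hv.2.2.2
      rcases hp with rfl | rfl | rfl | rfl <;> rcases hq with rfl | rfl | rfl | rfl <;> tauto
    obtain ⟨u, huS, hu⟩ := dis x y hxy
    have huB : u ∉ ({x, y, z, w} : Set V) := by
      simp only [Set.mem_insert_iff, Set.mem_singleton_iff]
      push_neg
      exact ⟨fun h => hxS (h ▸ huS), fun h => hyS (h ▸ huS),
        fun h => hzS (h ▸ huS), fun h => hwS (h ▸ huS)⟩
    exact hu (module_edist G _ hmod u huB x (by simp) y (by simp))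
  have badT : ∀ a b c : V, a ≠ b → a ≠ c → b ≠ c →
      Pp G a b c ∨ Pp G a c b ∨ Pp G b c a := by
    intro a b c h1 h2 h3
    by_contra hcon
    push_neg at hcon
    exact hng ⟨a, b, c, h1, h2, h3, hcon.1, hcon.2.1, hcon.2.2⟩
  have h₁ := badT x y z hxy hxz hyz
  have h₂ := badT x y w hxy hxw hyw
  have h₃ := badT x z w hxz hxw hzw
  have h₄ := badT y z w hyz hyw hzw
  rcases h₁ with h₁ | h₁ | h₁ <;> rcases h₂ with h₂ | h₂ | h₂ <;>
    rcases h₃ with h₃ | h₃ | h₃ <;> rcases h₄ with h₄ | h₄ | h₄ <;>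
    first
    | exact twin h₁ h₂ (by assumption) (by assumption) (by assumption) (by assumption)
        (by assumption) (by assumption)
    | exact twin h₁ h₃ (by assumption) (by assumption) (by assumption) (by assumption)
        (by assumption) (by assumption)
    | exact twin h₁ h₄ (by assumption) (by assumption) (by assumption) (by assumption)
        (by assumption) (by assumption)
    | exact twin h₂ h₃ (by assumption) (by assumption) (by assumption) (by assumption)
        (by assumption) (by assumption)
    | exact twin h₂ h₄ (by assumption) (by assumption) (by assumption) (by assumption)
        (by assumption) (by assumption)
    | exact twin h₃ h₄ (by assumption) (by assumption) (by assumption) (by assumption)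
        (by assumption) (by assumption)
    | exact quadkill (fun v hv1 hv2 hv3 hv4 => by
        have q₁ := h₁.app v (by assumption) (by assumption) (by assumption)
        have q₂ := h₂.app v (by assumption) (by assumption) (by assumption)
        have q₃ := h₃.app v (by assumption) (by assumption) (by assumption)
        have q₄ := h₄.app v (by assumption) (by assumption) (by assumption)
        refine ⟨?_, ?_, ?_⟩ <;> tauto)



variable [Fintype V]

private lemma univ_resolving (G : SimpleGraph V) (r : ℕ) :
    IsDistResolving G r Finset.univ := by
  intro x y hxy
  exact ⟨x, Finset.mem_univ x, by
    rw [truncDist_self]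
    exact (truncDist_ne_zero G r hxy).symm⟩

private lemma dimr_nonempty (G : SimpleGraph V) (r : ℕ) :
    {k | ∃ S : Finset V, IsDistResolving G r S ∧ S.card = k}.Nonempty :=
  ⟨Finset.univ.card, Finset.univ, univ_resolving G r, rfl⟩

private lemma dimr_le (G : SimpleGraph V) (r : ℕ) {S : Finset V}
    (h : IsDistResolving G r S) : dimr G r ≤ S.card :=
  Nat.sInf_le ⟨S, h, rfl⟩

private lemma dimr_spec (G : SimpleGraph V) (r : ℕ) :
    ∃ S : Finset V, IsDistResolving G r S ∧ S.card = dimr G r :=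
  Nat.sInf_mem (dimr_nonempty G r)

private lemma punctured_resolving [DecidableEq V] (G : SimpleGraph V) (r : ℕ) (x₀ : V) :
    IsDistResolving G r (Finset.univ.erase x₀) := by
  classical
  intro x y hxy
  by_cases hx : x = x₀
  · subst hx
    refine ⟨y, Finset.mem_erase.mpr ⟨fun h => hxy h.symm, Finset.mem_univ y⟩, ?_⟩
    rw [truncDist_self]
    exact truncDist_ne_zero G r (Ne.symm hxy)
  · refine ⟨x, Finset.mem_erase.mpr ⟨hx, Finset.mem_univ x⟩, ?_⟩
    rw [truncDist_self]
    exact (truncDist_ne_zero G r hxy).symm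

private lemma thDim_le (G : SimpleGraph V) : thDim G ≤ Fintype.card V - 1 := by
  classical
  have h0 : thDim G ≤ 0 + dimr G 0 := Nat.sInf_le ⟨0, rfl⟩
  cases isEmpty_or_nonempty V with
  | inl h =>
    have : dimr G 0 ≤ (∅ : Finset V).card :=
      dimr_le G 0 (fun x _ _ => isEmptyElim x)
    simp at this
    omega
  | inr h =>
    obtain ⟨x₀⟩ := h
    have h1 : dimr G 0 ≤ (Finset.univ.erase x₀).card :=
      dimr_le G 0 (punctured_resolving G 0 x₀)
    rw [Finset.card_erase_of_mem (Finset.mem_univ x₀), Finset.card_univ] at h1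
    omega

private lemma dim0_lb (G : SimpleGraph V) : Fintype.card V ≤ dimr G 0 + 1 := by
  classical
  obtain ⟨S, hS, hc⟩ := dimr_spec G 0
  rw [← hc]
  by_contra hcon
  push_neg at hcon
  have h2 : 1 < Sᶜ.card := by
    rw [Finset.card_compl]
    omega
  obtain ⟨x, hx, y, hy, hxy⟩ := Finset.one_lt_card.mp h2
  obtain ⟨v, hvS, hne⟩ := hS x y hxy
  have hvx : v ≠ x := fun h => (Finset.mem_compl.mp hx) (h ▸ hvS)
  have hvy : v ≠ y := fun h => (Finset.mem_compl.mp hy) (h ▸ hvS)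
  have hval : ∀ z : V, v ≠ z → truncDist G 0 v z = 1 := by
    intro z hvz
    have h1 : (1 : ℕ∞) ≤ G.edist v z :=
      ENat.one_le_iff_ne_zero.mpr (by simp [SimpleGraph.edist_eq_zero_iff, hvz])
    rw [truncDist]
    have : ((0 : ℕ) : ℕ∞) + 1 = 1 := by norm_cast
    rw [this]
    exact min_eq_right h1
  rw [hval x hvx, hval y hvy] at hne
  exact hne rfl


private lemma resolve_compl (G : SimpleGraph V) {S : Finset V}
    (h : IsDistResolving G 1 S) : IsDistResolving Gᶜ 1 S := by
  intro x y hxy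
  obtain ⟨v, hvS, hv⟩ := h x y hxy
  by_cases hvx : v = x
  · subst hvx
    refine ⟨v, hvS, ?_⟩
    rw [truncDist_self]
    exact (truncDist_ne_zero Gᶜ 1 hxy).symm
  · by_cases hvy : v = y
    · subst hvy
      refine ⟨v, hvS, ?_⟩
      rw [truncDist_self]
      exact truncDist_ne_zero Gᶜ 1 (Ne.symm hxy)
    · have hniff : ¬ (G.Adj v x ↔ G.Adj v y) := by
        intro hiff
        apply hv
        by_cases h1 : G.Adj v x
        · rw [truncDist_one_adj G h1, truncDist_one_adj G (hiff.mp h1)]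
        · rw [truncDist_one_nadj G hvx h1,
            truncDist_one_nadj G hvy (fun hh => h1 (hiff.mpr hh))]
      have hniff' : ¬ (Gᶜ.Adj v x ↔ Gᶜ.Adj v y) := by
        simp only [SimpleGraph.compl_adj]
        tauto
      exact ⟨v, hvS, truncDist_one_ne Gᶜ hvx hvy hniff'⟩

private lemma dim1_compl [Fintype V] (G : SimpleGraph V) : dimr G 1 = dimr Gᶜ 1 := by
  have h1 : ∀ (H : SimpleGraph V), dimr Hᶜ 1 ≤ dimr H 1 := by
    intro H
    obtain ⟨S, hS, hc⟩ := dimr_spec H 1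
    rw [← hc]
    exact dimr_le Hᶜ 1 (resolve_compl H hS)
  refine le_antisymm ?_ (h1 G)
  have := h1 Gᶜ
  rwa [compl_compl] at this


private lemma triple_bound [Fintype V] (G : SimpleGraph V) {a b c : V}
    (hab : a ≠ b) (hac : a ≠ c) (hbc : b ≠ c)
    (d1 : Dis G a b c) (d2 : Dis G a c b) (d3 : Dis G b c a) :
    dimr G 1 + 3 ≤ Fintype.card V := by
  classical
  have hcard3 : ({a, b, c} : Finset V).card = 3 := by
    rw [Finset.card_insert_of_notMem (by simp [hab, hac]),
      Finset.card_insert_of_notMem (by simp [hbc]), Finset.card_singleton]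
  have h3n : 3 ≤ Fintype.card V := by
    rw [← hcard3]; exact Finset.card_le_univ _
  have wit : ∀ p q t : V, Dis G p q t →
      ∃ v, v ≠ p ∧ v ≠ q ∧ v ≠ t ∧ truncDist G 1 v p ≠ truncDist G 1 v q := by
    intro p q t hD
    unfold Dis Pp at hD
    push_neg at hD
    obtain ⟨v, h1, h2, h3, h4⟩ := hD
    exact ⟨v, h1, h2, h3, truncDist_one_ne G h1 h2 (by tauto)⟩
  have hres : IsDistResolving G 1 (Finset.univ \ {a, b, c}) := by
    intro x y hxy
    by_cases hx : x ∈ ({a, b, c} : Finset V)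
    · by_cases hy : y ∈ ({a, b, c} : Finset V)
      · simp only [Finset.mem_insert, Finset.mem_singleton] at hx hy
        have mem : ∀ v : V, v ≠ a → v ≠ b → v ≠ c →
            v ∈ Finset.univ \ ({a, b, c} : Finset V) := by
          intro v h1 h2 h3
          simp [Finset.mem_sdiff, h1, h2, h3]
        rcases hx with rfl | rfl | rfl <;> rcases hy with rfl | rfl | rfl
        · exact absurd rfl hxy
        · obtain ⟨v, h1, h2, h3, h4⟩ := wit _ _ _ d1
          exact ⟨v, mem v h1 h2 h3, h4⟩
        · obtain ⟨v, h1, h2, h3, h4⟩ := wit _ _ _ d2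
          exact ⟨v, mem v h1 h3 h2, h4⟩
        · obtain ⟨v, h1, h2, h3, h4⟩ := wit _ _ _ d1
          exact ⟨v, mem v h1 h2 h3, h4.symm⟩
        · exact absurd rfl hxy
        · obtain ⟨v, h1, h2, h3, h4⟩ := wit _ _ _ d3
          exact ⟨v, mem v h3 h1 h2, h4⟩
        · obtain ⟨v, h1, h2, h3, h4⟩ := wit _ _ _ d2
          exact ⟨v, mem v h1 h3 h2, h4.symm⟩
        · obtain ⟨v, h1, h2, h3, h4⟩ := wit _ _ _ d3
          exact ⟨v, mem v h3 h1 h2, h4.symm⟩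
        · exact absurd rfl hxy
      · refine ⟨y, Finset.mem_sdiff.mpr ⟨Finset.mem_univ y, hy⟩, ?_⟩
        rw [truncDist_self]
        exact truncDist_ne_zero G 1 (Ne.symm hxy)
    · refine ⟨x, Finset.mem_sdiff.mpr ⟨Finset.mem_univ x, hx⟩, ?_⟩
      rw [truncDist_self]
      exact (truncDist_ne_zero G 1 hxy).symm
  have hd := dimr_le G 1 hres
  rw [Finset.card_sdiff_of_subset (Finset.subset_univ _), Finset.card_univ, hcard3] at hd
  omega

private lemma crux [Fintype V] (G : SimpleGraph V) :
    thDim G = Fintype.card V - 1 ↔ Fintype.card V - 1 ≤ 1 + dimr G 1 := by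
  constructor
  · intro h
    have h1 : thDim G ≤ 1 + dimr G 1 := Nat.sInf_le ⟨1, rfl⟩
    omega
  · intro h
    have hub := thDim_le G
    have hlb : Fintype.card V - 1 ≤ thDim G := by
      have hne : {m | ∃ r : ℕ, m = r + dimr G r}.Nonempty := ⟨0 + dimr G 0, 0, rfl⟩
      apply le_csInf hne
      rintro m ⟨r, rfl⟩
      match r with
      | 0 => have := dim0_lb G; omega
      | 1 => omega
      | (r + 2) =>
        by_contra hcon
        push_neg at hcon
        obtain ⟨S, hS, hc⟩ := dimr_spec G (r + 2)
        have hcard : S.card + 4 ≤ Fintype.card V := by omega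
        obtain ⟨a, b, c, hab, hac, hbc, d1, d2, d3⟩ := key_triple G hS hcard
        have := triple_bound G hab hac hbc d1 d2 d3
        omega
    omega


end Stmt12Aux

/-- `th_dim(G) = n - 1` iff `th_dim(Ḡ) = n - 1`. -/
theorem stmt12 {V : Type*} [Fintype V] (G : SimpleGraph V) :
    thDim G = Fintype.card V - 1 ↔ thDim Gᶜ = Fintype.card V - 1 := by
  rw [crux G, crux Gᶜ, dim1_compl G]
end

section
/- The maximum possible edge metric dimension throttling number of a tree of order n ≥ 2 is n − 2: every tree T on n ≥ 2 vertices satisfies th_edim(T) ≤ n − 2, and the star K_{1,n−1} satisfies th_edim(K_{1,n−1}) = n − 2. -/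
open SimpleGraph Filter

lemma edgeEDist_mk {V : Type*} (G : SimpleGraph V) (a b v : V) :
    edgeEDist G s(a,b) v = min (G.edist a v) (G.edist b v) := rfl

lemma edgeEDist_eq_zero {V : Type*} (G : SimpleGraph V) (e : Sym2 V) (v : V) :
    edgeEDist G e v = 0 ↔ v ∈ e := by
  induction e using Sym2.ind with
  | _ a b =>
    rw [edgeEDist_mk, Sym2.mem_iff, show (0 : ℕ∞) = ⊥ from rfl, min_eq_bot]
    simp only [show (⊥ : ℕ∞) = 0 from rfl]
    constructor
    · rintro (h|h)
      · exact Or.inl (SimpleGraph.edist_eq_zero_iff.mp h).symm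
      · exact Or.inr (SimpleGraph.edist_eq_zero_iff.mp h).symm
    · rintro (rfl|rfl) <;> simp

lemma truncEdgeDist_zero_of_mem {V : Type*} (G : SimpleGraph V) {e : Sym2 V} {v : V}
    (h : v ∈ e) : truncEdgeDist G 0 e v = 0 := by
  rw [← edgeEDist_eq_zero G e v] at h
  simp [truncEdgeDist, h]

lemma truncEdgeDist_zero_of_notMem {V : Type*} (G : SimpleGraph V) {e : Sym2 V} {v : V}
    (h : v ∉ e) : truncEdgeDist G 0 e v = 1 := by
  rw [← edgeEDist_eq_zero G e v] at h
  have h1 : 1 ≤ edgeEDist G e v := ENat.one_le_iff_ne_zero.mpr h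
  rw [truncEdgeDist]
  simpa using min_eq_right h1

lemma tri_free {V : Type*} {G : SimpleGraph V} (h : G.IsAcyclic) {u w y : V}
    (huw : G.Adj u w) (hyu : G.Adj y u) (hyw : G.Adj y w) : False := by
  apply h (Walk.cons huw (Walk.cons hyw.symm (Walk.cons hyu Walk.nil)))
  simp [Walk.isCycle_def, Walk.isTrail_def, huw.ne, hyu.ne, hyw.ne, huw.ne', hyu.ne', hyw.ne',
    Sym2.eq_iff]


lemma pair_eq {V : Type*} {u w a b : V} (hab : a ≠ b) (ha : a = u ∨ a = w)
    (hb : b = u ∨ b = w) : s(a,b) = s(u,w) := by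
  rcases ha with rfl|rfl <;> rcases hb with rfl|rfl
  · exact absurd rfl hab
  · rfl
  · exact Sym2.eq_swap
  · exact absurd rfl hab

lemma combo {V : Type*} {G : SimpleGraph V} (hac : G.IsAcyclic) {u w a b c d : V}
    (huw : G.Adj u w) (hab : G.Adj a b) (hcd : G.Adj c d)
    (hne : s(a,b) ≠ s(c,d))
    (hK : ∀ v, v ≠ u → v ≠ w → (v ∈ s(a,b) ↔ v ∈ s(c,d))) : False := by
  have tri : ∀ y, G.Adj y u → G.Adj y w → False := fun y h1 h2 => by
    apply hac (Walk.cons huw (Walk.cons h2.symm (Walk.cons h1 Walk.nil)))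
    simp [Walk.isCycle_def, Walk.isTrail_def, huw.ne, h1.ne, h2.ne, huw.ne', h1.ne', h2.ne',
      Sym2.eq_iff]
  -- helper: membership transfer
  have hK' : ∀ v, v ≠ u → v ≠ w → v ∈ s(c,d) → v ∈ s(a,b) := fun v h1 h2 h3 =>
    (hK v h1 h2).mpr h3
  have hK2 : ∀ v, v ≠ u → v ≠ w → v ∈ s(a,b) → v ∈ s(c,d) := fun v h1 h2 h3 =>
    (hK v h1 h2).mp h3
  by_cases hE : s(a,b) = s(u,w)
  · -- then all endpoints of f are in {u,w}, so f = s(u,w) = e, contra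
    have hc' : c = u ∨ c = w := by
      by_contra h; push_neg at h
      have := hK' c h.1 h.2 (Sym2.mem_mk_left c d)
      rw [hE] at this
      rcases Sym2.mem_iff.mp this with h'|h' <;> [exact h.1 h'; exact h.2 h']
    have hd' : d = u ∨ d = w := by
      by_contra h; push_neg at h
      have := hK' d h.1 h.2 (Sym2.mem_mk_right c d)
      rw [hE] at this
      rcases Sym2.mem_iff.mp this with h'|h' <;> [exact h.1 h'; exact h.2 h']
    exact hne (hE.trans (pair_eq hcd.ne hc' hd').symm)
  by_cases hF : s(c,d) = s(u,w)
  · have ha' : a = u ∨ a = w := by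
      by_contra h; push_neg at h
      have := hK2 a h.1 h.2 (Sym2.mem_mk_left a b)
      rw [hF] at this
      rcases Sym2.mem_iff.mp this with h'|h' <;> [exact h.1 h'; exact h.2 h']
    have hb' : b = u ∨ b = w := by
      by_contra h; push_neg at h
      have := hK2 b h.1 h.2 (Sym2.mem_mk_right a b)
      rw [hF] at this
      rcases Sym2.mem_iff.mp this with h'|h' <;> [exact h.1 h'; exact h.2 h']
    exact hne ((pair_eq hab.ne ha' hb').trans hF.symm)
  -- general step: given edges e=s(a,b), f=s(c,d) (with membership transfer from e to f),
  -- e ≠ s(u,w) means e has an endpoint outside {u,w}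
  -- Case: both endpoints of e outside {u,w} → e = f
  by_cases hA : (a ≠ u ∧ a ≠ w) ∧ (b ≠ u ∧ b ≠ w)
  · have h1 := hK2 a hA.1.1 hA.1.2 (Sym2.mem_mk_left a b)
    have h2 := hK2 b hA.2.1 hA.2.2 (Sym2.mem_mk_right a b)
    exact hne ((Sym2.mem_and_mem_iff hab.ne).mp ⟨h1, h2⟩).symm
  by_cases hC : (c ≠ u ∧ c ≠ w) ∧ (d ≠ u ∧ d ≠ w)
  · have h1 := hK' c hC.1.1 hC.1.2 (Sym2.mem_mk_left c d)
    have h2 := hK' d hC.2.1 hC.2.2 (Sym2.mem_mk_right c d)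
    exact hne ((Sym2.mem_and_mem_iff hcd.ne).mp ⟨h1, h2⟩)
  -- now e has exactly one endpoint in {u,w}, likewise f
  push_neg at hA hC
  -- get representation of e: x ∈ {u,w}, adjacent to y ∉ {u,w}
  have he : ∃ x y, s(x,y) = s(a,b) ∧ G.Adj x y ∧ (x = u ∨ x = w) ∧ y ≠ u ∧ y ≠ w := by
    by_cases h1 : a = u ∨ a = w
    · refine ⟨a, b, rfl, hab, h1, ?_, ?_⟩ <;>
      · rintro rfl
        exact hE (pair_eq hab.ne h1 (by tauto))
    · push_neg at h1
      refine ⟨b, a, Sym2.eq_swap, hab.symm, ?_, h1.1, h1.2⟩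
      by_cases hbu : b = u
      · exact Or.inl hbu
      · exact Or.inr (hA h1 hbu)
  have hf : ∃ x y, s(x,y) = s(c,d) ∧ G.Adj x y ∧ (x = u ∨ x = w) ∧ y ≠ u ∧ y ≠ w := by
    by_cases h1 : c = u ∨ c = w
    · refine ⟨c, d, rfl, hcd, h1, ?_, ?_⟩ <;>
      · rintro rfl
        exact hF (pair_eq hcd.ne h1 (by tauto))
    · push_neg at h1
      refine ⟨d, c, Sym2.eq_swap, hcd.symm, ?_, h1.1, h1.2⟩
      by_cases hdu : d = u
      · exact Or.inl hdu
      · exact Or.inr (hC h1 hdu)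
  obtain ⟨x, y, hxy, haxy, hx, hy1, hy2⟩ := he
  obtain ⟨x1, y1, hxy1, haxy1, hx1, hy11, hy21⟩ := hf
  -- y ∈ e, outside {u,w}, so y ∈ f = s(x1,y1); since y ≠ u, y ≠ w, and x1 ∈ {u,w}, y = y1
  have hyf : y ∈ s(c,d) := hK2 y hy1 hy2 (hxy ▸ Sym2.mem_mk_right x y)
  rw [← hxy1] at hyf
  have hyy1 : y = y1 := by
    rcases Sym2.mem_iff.mp hyf with h|h
    · rcases hx1 with rfl|rfl
      · exact absurd h hy1
      · exact absurd h hy2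
    · exact h
  subst hyy1
  -- x ≠ x1 since e ≠ f
  have hxx1 : x ≠ x1 := by
    rintro rfl
    exact hne (hxy.symm.trans hxy1)
  -- so {x,x1} = {u,w}, and y is adjacent to both u and w
  have hadju : G.Adj y u ∧ G.Adj y w := by
    rcases hx with rfl|rfl <;> rcases hx1 with rfl|rfl
    · exact absurd rfl hxx1
    · exact ⟨haxy.symm, haxy1.symm⟩
    · exact ⟨haxy1.symm, haxy.symm⟩
    · exact absurd rfl hxx1
  exact tri y hadju.1 hadju.2


-- real content below
lemma edge_exists {V : Type*} {G : SimpleGraph V} {e : Sym2 V} (he : e ∈ G.edgeSet) :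
    ∃ a b, G.Adj a b ∧ e = s(a,b) := by
  revert he
  induction e using Sym2.ind with
  | _ a b => exact fun he => ⟨a, b, he, rfl⟩

lemma trunc_ne_of_mem_notMem {V : Type*} (G : SimpleGraph V) {e f : Sym2 V} {v : V}
    (h1 : v ∈ e) (h2 : v ∉ f) : truncEdgeDist G 0 e v ≠ truncEdgeDist G 0 f v := by
  rw [truncEdgeDist_zero_of_mem G h1, truncEdgeDist_zero_of_notMem G h2]
  simp

theorem tree_bound {V : Type} [Fintype V] (T : SimpleGraph V) (hc : T.Connected)
    (hac : T.IsAcyclic) {n : ℕ} (hcard : Fintype.card V = n) (hn : 2 ≤ n) :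
    thEdim T ≤ n - 2 := by
  classical
  -- find an edge
  obtain ⟨u, w, huw0⟩ : ∃ u w : V, u ≠ w := by
    apply Fintype.exists_pair_of_one_lt_card
    omega
  obtain ⟨p⟩ : T.Reachable u w := hc.preconnected u w
  obtain ⟨u, w, huw⟩ : ∃ u w : V, T.Adj u w := by
    cases p with
    | nil => exact absurd rfl huw0
    | cons h _ => exact ⟨_, _, h⟩
  clear huw0
  set S : Finset V := Finset.univ \ {u, w} with hS
  have hres : IsEdgeResolving T 0 S := by
    intro e he f hf hef
    by_contra hcon
    push_neg at hcon
    have hK : ∀ v, v ≠ u → v ≠ w → (v ∈ e ↔ v ∈ f) := by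
      intro v h1 h2
      have hvS : v ∈ S := by simp [hS, h1, h2]
      have heq := hcon v hvS
      by_cases hve : v ∈ e <;> by_cases hvf : v ∈ f
      · exact iff_of_true hve hvf
      · exact absurd heq (trunc_ne_of_mem_notMem T hve hvf)
      · exact absurd heq.symm (trunc_ne_of_mem_notMem T hvf hve)
      · exact iff_of_false hve hvf
    obtain ⟨a, b, hab, rfl⟩ := edge_exists he
    obtain ⟨c, d, hcd, rfl⟩ := edge_exists hf
    exact combo hac huw hab hcd hef hK
  have hScard : S.card = n - 2 := by
    rw [hS, Finset.card_sdiff_of_subset (Finset.subset_univ _), Finset.card_univ, hcard]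
    have : ({u, w} : Finset V).card = 2 := by
      rw [Finset.card_insert_of_notMem (by simp [huw.ne]), Finset.card_singleton]
    rw [this]
  calc thEdim T ≤ 0 + edimr T 0 := Nat.sInf_le ⟨0, rfl⟩
    _ = edimr T 0 := zero_add _
    _ ≤ n - 2 := by
        rw [← hScard]
        exact Nat.sInf_le ⟨S, hres, rfl⟩


-- real content
lemma truncEdgeDist_of_mem {V : Type*} (G : SimpleGraph V) {e : Sym2 V} {v : V}
    (h : v ∈ e) (r : ℕ) : truncEdgeDist G r e v = 0 := by
  rw [← edgeEDist_eq_zero G e v] at h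
  simp [truncEdgeDist, h]

section Star
variable {m : ℕ}

local notation "G" => completeBipartiteGraph (Fin 1) (Fin m)

lemma star_adj (j : Fin m) : (G).Adj (Sum.inl 0) (Sum.inr j) := by simp

lemma star_edge {e : Sym2 (Fin 1 ⊕ Fin m)} (he : e ∈ (G).edgeSet) :
    ∃ j : Fin m, e = s(Sum.inl 0, Sum.inr j) := by
  revert he
  induction e using Sym2.ind with
  | _ x y =>
    intro he
    rw [SimpleGraph.mem_edgeSet] at he
    cases x with
    | inl i =>
      cases y with
      | inl i' => simp at he
      | inr j => exact ⟨j, by rw [Subsingleton.elim i 0]⟩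
    | inr j =>
      cases y with
      | inl i => exact ⟨j, by rw [Subsingleton.elim i 0, Sym2.eq_swap]⟩
      | inr j' => simp at he

lemma star_edge_ne {i j : Fin m} (hij : i ≠ j) :
    s(Sum.inl (0 : Fin 1), Sum.inr i) ≠ s(Sum.inl (0 : Fin 1), Sum.inr j) := by
  intro h
  exact hij (Sum.inr_injective (Sym2.congr_right.mp h))

lemma star_trunc_other {j k : Fin m} (hjk : j ≠ k) (r : ℕ) :
    truncEdgeDist G r s(Sum.inl 0, Sum.inr j) (Sum.inr k) = 1 := by
  have h1 : (G).edist (Sum.inl 0) (Sum.inr k) = 1 :=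
    SimpleGraph.edist_eq_one_iff_adj.mpr (star_adj k)
  have h2 : (G).edist (Sum.inr j) (Sum.inr k) ≠ 0 := by
    intro h
    exact hjk (Sum.inr_injective (SimpleGraph.edist_eq_zero_iff.mp h))
  rw [truncEdgeDist, edgeEDist_mk, h1,
    min_eq_left (ENat.one_le_iff_ne_zero.mpr h2)]
  exact min_eq_left le_add_self

lemma star_univ_res (r : ℕ) : IsEdgeResolving G r (Finset.univ) := by
  intro e he f hf hef
  obtain ⟨i, rfl⟩ := star_edge he
  obtain ⟨j, rfl⟩ := star_edge hf
  have hij : i ≠ j := fun h => hef (by rw [h])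
  refine ⟨Sum.inr i, Finset.mem_univ _, ?_⟩
  rw [truncEdgeDist_of_mem G (Sym2.mem_mk_right _ _) r, star_trunc_other (Ne.symm hij) r]
  simp

lemma star_lower {n : ℕ} (hn : 2 ≤ n) (r : ℕ)
    {S : Finset (Fin 1 ⊕ Fin (n-1))}
    (hres : IsEdgeResolving (completeBipartiteGraph (Fin 1) (Fin (n-1))) r S) :
    n - 2 ≤ S.card := by
  classical
  have key : ∀ i j : Fin (n-1), i ≠ j → Sum.inr i ∈ S ∨ Sum.inr j ∈ S := by
    intro i j hij
    obtain ⟨v, hvS, hvne⟩ := hres _ ((completeBipartiteGraph (Fin 1) (Fin (n-1))).mem_edgeSet.mpr (star_adj i))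
      _ ((completeBipartiteGraph (Fin 1) (Fin (n-1))).mem_edgeSet.mpr (star_adj j)) (star_edge_ne hij)
    cases v with
    | inl x =>
      exfalso
      apply hvne
      rw [Subsingleton.elim x 0,
        truncEdgeDist_of_mem _ (Sym2.mem_mk_left _ _) r,
        truncEdgeDist_of_mem _ (Sym2.mem_mk_left _ _) r]
    | inr k =>
      by_cases hki : k = i
      · exact Or.inl (hki ▸ hvS)
      by_cases hkj : k = j
      · exact Or.inr (hkj ▸ hvS)
      exfalso
      apply hvne
      rw [star_trunc_other (fun h => hki h.symm) r, star_trunc_other (fun h => hkj h.symm) r]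
  set P : Finset (Fin (n-1)) := Finset.univ.filter (fun i => Sum.inr i ∈ S) with hP
  have hPcard : P.card ≤ S.card := by
    apply Finset.card_le_card_of_injOn (fun i => Sum.inr i)
    · intro i hi
      exact (Finset.mem_filter.mp hi).2
    · intro i _ j _ h
      exact Sum.inr_injective h
  have hMcard : (Finset.univ.filter (fun i => Sum.inr i ∉ S)).card ≤ 1 := by
    apply Finset.card_le_one.mpr
    intro i hi j hj
    by_contra hij
    rcases key i j hij with h | h
    · exact (Finset.mem_filter.mp hi).2 h
    · exact (Finset.mem_filter.mp hj).2 h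
  have hsum := Finset.card_filter_add_card_filter_not
    (s := (Finset.univ : Finset (Fin (n-1)))) (p := fun i => Sum.inr i ∈ S)
  rw [Finset.card_univ, Fintype.card_fin, ← hP] at hsum
  omega

lemma star_upper {n : ℕ} (hn : 2 ≤ n) :
    thEdim (completeBipartiteGraph (Fin 1) (Fin (n-1))) ≤ n - 2 := by
  classical
  set i0 : Fin (n-1) := ⟨0, by omega⟩ with hi0
  set S : Finset (Fin 1 ⊕ Fin (n-1)) :=
    (Finset.univ.erase i0).image Sum.inr with hSdef
  have hres : IsEdgeResolving (completeBipartiteGraph (Fin 1) (Fin (n-1))) 0 S := by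
    intro e he f hf hef
    obtain ⟨i, rfl⟩ := star_edge he
    obtain ⟨j, rfl⟩ := star_edge hf
    have hij : i ≠ j := fun h => hef (by rw [h])
    by_cases hii0 : i = i0
    · have hjj0 : j ≠ i0 := fun h => hij (hii0.trans h.symm)
      refine ⟨Sum.inr j, ?_, ?_⟩
      · exact Finset.mem_image_of_mem _ (Finset.mem_erase.mpr ⟨hjj0, Finset.mem_univ _⟩)
      · refine Ne.symm (trunc_ne_of_mem_notMem _ (Sym2.mem_mk_right _ _) ?_)
        rw [Sym2.mem_iff]
        push_neg
        exact ⟨by simp, fun h => hij (Sum.inr_injective h).symm⟩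
    · refine ⟨Sum.inr i, ?_, ?_⟩
      · exact Finset.mem_image_of_mem _ (Finset.mem_erase.mpr ⟨hii0, Finset.mem_univ _⟩)
      · refine trunc_ne_of_mem_notMem _ (Sym2.mem_mk_right _ _) ?_
        rw [Sym2.mem_iff]
        push_neg
        exact ⟨by simp, fun h => hij (Sum.inr_injective h)⟩
  have hScard : S.card = n - 2 := by
    rw [hSdef, Finset.card_image_of_injective _ Sum.inr_injective,
      Finset.card_erase_of_mem (Finset.mem_univ _), Finset.card_univ, Fintype.card_fin]
    omega
  calc thEdim (completeBipartiteGraph (Fin 1) (Fin (n-1)))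
      ≤ 0 + edimr (completeBipartiteGraph (Fin 1) (Fin (n-1))) 0 := Nat.sInf_le ⟨0, rfl⟩
    _ = edimr (completeBipartiteGraph (Fin 1) (Fin (n-1))) 0 := zero_add _
    _ ≤ n - 2 := by
        rw [← hScard]
        exact Nat.sInf_le ⟨S, hres, rfl⟩

lemma star_eq {n : ℕ} (hn : 2 ≤ n) :
    thEdim (completeBipartiteGraph (Fin 1) (Fin (n-1))) = n - 2 := by
  refine le_antisymm (star_upper hn) ?_
  have hne1 : {m | ∃ r : ℕ, m = r + edimr (completeBipartiteGraph (Fin 1) (Fin (n-1))) r}.Nonempty :=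
    ⟨0 + edimr (completeBipartiteGraph (Fin 1) (Fin (n-1))) 0, 0, rfl⟩
  apply le_csInf hne1
  rintro m ⟨r, rfl⟩
  have hlow : n - 2 ≤ edimr (completeBipartiteGraph (Fin 1) (Fin (n-1))) r := by
    have hne2 : {k | ∃ S : Finset (Fin 1 ⊕ Fin (n-1)),
        IsEdgeResolving (completeBipartiteGraph (Fin 1) (Fin (n-1))) r S ∧ S.card = k}.Nonempty :=
      ⟨(Finset.univ : Finset (Fin 1 ⊕ Fin (n-1))).card, Finset.univ, star_univ_res r, rfl⟩
    apply le_csInf hne2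
    rintro k ⟨S, hS, rfl⟩
    exact star_lower hn r hS
  omega

end Star


/-- The maximum edge metric dimension throttling number of a tree of
order `n ≥ 2` is `n - 2`: every such tree satisfies `th_edim(T) ≤ n - 2`, and the
star `K_{1,n-1}` attains `th_edim = n - 2`. -/
theorem stmt16 (n : ℕ) (hn : 2 ≤ n) :
    (∀ (V : Type) [Fintype V] (T : SimpleGraph V), T.Connected → T.IsAcyclic →
      Fintype.card V = n → thEdim T ≤ n - 2) ∧
    thEdim (completeBipartiteGraph (Fin 1) (Fin (n - 1))) = n - 2 := by
  constructor
  · intro V _ T hc hac hcard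
    exact tree_bound T hc hac hcard hn
  · exact star_eq hn
end
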